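/- arXiv:math/0610201 — 3 statements merged into one kernel-verified Lean document; each statement's English description precedes it below -/
import Mathlib

section
/- Let R be a von Neumann regular ring. Then for every bounded chain complex P of finitely generated projective right R-modules and every (arbitrary) chain complex Q of right R-modules, the map sending the chain-homotopy class of a chain map f : P → Q to the family (H_n(f))_n is a bijection from the set of chain-homotopy classes of chain maps P → Q onto the set of families of R-module homomorphisms (H_n(P) → H_n(Q))_n. -/
open CategoryTheory CategoryTheory.Limits HomologicalComplex TensorProduct

universe u

/-- A chain complex of right `R`-modules (i.e. left `Rᵐᵒᵖ`-modules) is perfect if it is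
bounded and each term is a finitely generated projective module. -/
def IsPerfect (R : Type u) [Ring R] (P : ChainComplex (ModuleCat.{u} Rᵐᵒᵖ) ℤ) : Prop :=
  (∃ a b : ℤ, ∀ n : ℤ, (n < a ∨ b < n) → IsZero (P.X n)) ∧
    ∀ n : ℤ, Module.Finite Rᵐᵒᵖ (P.X n) ∧ Module.Projective Rᵐᵒᵖ (P.X n)

/-- The map sending the chain-homotopy class of a chain map `f : P ⟶ Q` to the family
`(H_n f)_n` is a bijection onto the set of families of homomorphisms `H_n P ⟶ H_n Q`:
it is injective on homotopy classes (maps equal on homology are homotopic) and surjective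
(every family of maps on homology is realized by a chain map). -/
def HomologyFullFaithful (R : Type u) [Ring R]
    (P Q : ChainComplex (ModuleCat.{u} Rᵐᵒᵖ) ℤ) : Prop :=
  (∀ f g : P ⟶ Q, (∀ n : ℤ, homologyMap f n = homologyMap g n) → Nonempty (Homotopy f g)) ∧
    ∀ φ : ∀ n : ℤ, P.homology n ⟶ Q.homology n, ∃ f : P ⟶ Q, ∀ n : ℤ, homologyMap f n = φ n


section VNRegular
variable {A : Type u} [Ring A]

/-- A submodule admits a linear retraction (it is the image of an idempotent endomorphism). -/
def HasRetraction {M : Type u} [AddCommGroup M] [Module A M] (N : Submodule A M) : Prop :=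
  ∃ ρ : M →ₗ[A] M, (∀ x, ρ x ∈ N) ∧ (∀ x ∈ N, ρ x = x)

theorem span_singleton_idem (hA : ∀ x : A, ∃ y, x = x * y * x) (x : A) :
    ∃ e : A, e * e = e ∧ Submodule.span A {x} = Submodule.span A {e} := by
  obtain ⟨y, hy⟩ := hA x
  refine ⟨y * x, ?_, le_antisymm ?_ ?_⟩
  · have : y * x * (y * x) = y * (x * y * x) := by noncomm_ring
    rw [this, ← hy]
  · rw [Submodule.span_le, Set.singleton_subset_iff]
    refine Submodule.mem_span_singleton.2 ⟨x, ?_⟩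
    rw [smul_eq_mul, ← mul_assoc, ← hy]
  · rw [Submodule.span_le, Set.singleton_subset_iff]
    exact Submodule.mem_span_singleton.2 ⟨y, by rw [smul_eq_mul]⟩

theorem sup_span_idem (hA : ∀ x : A, ∃ y, x = x * y * x) (e f : A)
    (he : e * e = e) (_hf : f * f = f) :
    ∃ h : A, h * h = h ∧ Submodule.span A {e} ⊔ Submodule.span A {f} = Submodule.span A {h} := by
  set z := f - f * e with hz
  obtain ⟨g, hg, hspan⟩ := span_singleton_idem hA z
  have hgz : g ∈ Submodule.span A {z} := by
    rw [hspan]; exact Submodule.mem_span_singleton_self g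
  obtain ⟨a, ha⟩ := Submodule.mem_span_singleton.1 hgz
  have hze : z * e = 0 := by rw [hz]; noncomm_ring [he]
  have hge : g * e = 0 := by
    rw [← ha, smul_eq_mul, mul_assoc, hze, mul_zero]
  refine ⟨e + g - e * g, ?_, ?_⟩
  · have h1 : (e + g - e * g) * e = e := by
      simp only [sub_mul, add_mul, mul_assoc, hge, he, mul_zero, sub_zero, add_zero]
    have h2 : (e + g - e * g) * g = g := by
      simp only [sub_mul, add_mul, mul_assoc, hg, he]
      abel
    calc (e + g - e * g) * (e + g - e * g)
        = (e + g - e * g) * e + (e + g - e * g) * g - ((e + g - e * g) * e) * g := by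
          noncomm_ring
      _ = e + g - e * g := by rw [h1, h2]
  · set h := e + g - e * g with hh
    have hspan2 : Submodule.span A {e} ⊔ Submodule.span A {g} = Submodule.span A {h} := by
      apply le_antisymm
      · refine sup_le ?_ ?_ <;> rw [Submodule.span_le, Set.singleton_subset_iff]
        · refine Submodule.mem_span_singleton.2 ⟨e, ?_⟩
          rw [smul_eq_mul, hh, mul_sub, mul_add, ← mul_assoc, he]
          abel
        · refine Submodule.mem_span_singleton.2 ⟨g, ?_⟩
          rw [smul_eq_mul, hh, mul_sub, mul_add, ← mul_assoc, hge, zero_mul, hg, zero_add]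
          abel
      · rw [Submodule.span_le, Set.singleton_subset_iff, hh]
        have h1 : e + g - e * g = e + (1 - e) * g := by noncomm_ring
        rw [h1]
        exact Submodule.add_mem _
          (Submodule.mem_sup_left (Submodule.mem_span_singleton_self e))
          (Submodule.mem_sup_right (Submodule.mem_span_singleton.2 ⟨1 - e, rfl⟩))
    have key : Submodule.span A {e} ⊔ Submodule.span A {f}
        = Submodule.span A {e} ⊔ Submodule.span A {z} := by
      apply le_antisymm
      · refine sup_le le_sup_left ?_
        rw [Submodule.span_le, Set.singleton_subset_iff]
        have : f = f * e + z := by rw [hz]; noncomm_ring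
        rw [this]
        exact Submodule.add_mem _
          (Submodule.mem_sup_left (Submodule.mem_span_singleton.2 ⟨f, rfl⟩))
          (Submodule.mem_sup_right (Submodule.mem_span_singleton_self z))
      · refine sup_le le_sup_left ?_
        rw [Submodule.span_le, Set.singleton_subset_iff, hz]
        exact Submodule.sub_mem _
          (Submodule.mem_sup_right (Submodule.mem_span_singleton_self f))
          (Submodule.mem_sup_left (Submodule.mem_span_singleton.2 ⟨f, rfl⟩))
    rw [key, hspan, hspan2]

theorem fg_ideal_eq_span_idem (hA : ∀ x : A, ∃ y, x = x * y * x)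
    (N : Submodule A A) (hN : N.FG) :
    ∃ e : A, e * e = e ∧ N = Submodule.span A {e} := by
  obtain ⟨s, hs⟩ := hN
  subst hs
  classical
  induction s using Finset.induction_on with
  | empty =>
    exact ⟨0, by simp, by
      rw [Finset.coe_empty, Submodule.span_empty, Submodule.span_zero_singleton]⟩
  | @insert a s _ha ih =>
    obtain ⟨e₂, he₂, hs₂⟩ := ih
    obtain ⟨e₁, he₁, hs₁⟩ := span_singleton_idem hA a
    obtain ⟨h, hh, hsup⟩ := sup_span_idem hA e₁ e₂ he₁ he₂
    refine ⟨h, hh, ?_⟩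
    rw [Finset.coe_insert, Submodule.span_insert, hs₁, hs₂, hsup]

theorem hasRetraction_of_fg_ideal (hA : ∀ x : A, ∃ y, x = x * y * x)
    (N : Submodule A A) (hN : N.FG) : HasRetraction N := by
  obtain ⟨e, _he, rfl⟩ := fg_ideal_eq_span_idem hA N hN
  refine ⟨LinearMap.toSpanSingleton A A e, fun x => ?_, fun x hx => ?_⟩
  · exact Submodule.mem_span_singleton.2 ⟨x, rfl⟩
  · obtain ⟨a, rfl⟩ := Submodule.mem_span_singleton.1 hx
    show (a • e) • e = a • e
    rw [smul_eq_mul, smul_eq_mul, mul_assoc, _he]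

theorem hasRetraction_of_map {M M' : Type u} [AddCommGroup M] [Module A M]
    [AddCommGroup M'] [Module A M'] (i : M →ₗ[A] M') (pr : M' →ₗ[A] M)
    (hpi : ∀ x, pr (i x) = x) (N : Submodule A M)
    (h : HasRetraction (N.map i)) : HasRetraction N := by
  obtain ⟨ρ, hmem, hfix⟩ := h
  refine ⟨pr ∘ₗ ρ ∘ₗ i, fun x => ?_, fun x hx => ?_⟩
  · obtain ⟨w, hw, hww⟩ := hmem (i x)
    show pr (ρ (i x)) ∈ N
    rw [← hww, hpi]; exact hw
  · show pr (ρ (i x)) = x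
    rw [hfix _ ⟨x, hx, rfl⟩, hpi]

theorem hasRetraction_prod (hA : ∀ x : A, ∃ y, x = x * y * x)
    {M : Type u} [AddCommGroup M] [Module A M]
    (IH : ∀ N : Submodule A M, N.FG → HasRetraction N)
    (N : Submodule A (A × M)) (hN : N.FG) : HasRetraction N := by
  set p := LinearMap.fst A A M with hp
  have hIfg : (N.map p).FG := hN.map p
  obtain ⟨e, he, hI⟩ := fg_ideal_eq_span_idem hA (N.map p) hIfg
  have heI : e ∈ N.map p := by rw [hI]; exact Submodule.mem_span_singleton_self e
  obtain ⟨n₀, hn₀, hpn₀⟩ := heI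
  -- σ : A →ₗ A × M, a ↦ a • n₀
  set σ := LinearMap.toSpanSingleton A (A × M) n₀ with hσ
  have hpσ : ∀ x ∈ N.map p, p (σ x) = x := by
    intro x hx
    rw [hI] at hx
    obtain ⟨a, rfl⟩ := Submodule.mem_span_singleton.1 hx
    show p ((a • e) • n₀) = a • e
    rw [map_smul, hpn₀, smul_eq_mul, smul_eq_mul, mul_assoc, he]
  -- τ := id - σ ∘ p
  set τ := LinearMap.id (R := A) (M := A × M) - σ ∘ₗ p with hτ
  set N₀ := N.map τ with hN₀
  have hN₀N : N₀ ≤ N := by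
    rintro _ ⟨x, hx, rfl⟩
    show x - σ (p x) ∈ N
    exact N.sub_mem hx (N.smul_mem _ hn₀)
  have hN₀ker : ∀ w ∈ N₀, p w = 0 := by
    rintro _ ⟨x, hx, rfl⟩
    show p (x - σ (p x)) = 0
    rw [map_sub, hpσ _ ⟨x, hx, rfl⟩, sub_self]
  set N₁ := N₀.map (LinearMap.snd A A M) with hN₁
  have hN₁fg : N₁.FG := (hN.map τ).map _
  obtain ⟨ρ₁, hρ₁mem, hρ₁fix⟩ := IH N₁ hN₁fg
  have hinl : ∀ z ∈ N₁, ((0 : A), z) ∈ N₀ := by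
    rintro _ ⟨w, hw, rfl⟩
    have h1 : w = ((0 : A), w.2) := by
      ext
      · exact hN₀ker w hw
      · rfl
    show ((0 : A), w.2) ∈ N₀
    rw [← h1]; exact hw
  -- the retraction
  set πe : A →ₗ[A] A := LinearMap.toSpanSingleton A A e with hπe
  set σ' : A × M →ₗ[A] A × M := σ ∘ₗ πe ∘ₗ p with hσ'
  set Φ : A × M →ₗ[A] A × M :=
    σ' + (LinearMap.inr A A M) ∘ₗ ρ₁ ∘ₗ (LinearMap.snd A A M) ∘ₗ
      (LinearMap.id - σ') with hΦ
  have hσ'N : ∀ x, σ' x ∈ N := by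
    intro x
    show (πe (p x)) • n₀ ∈ N
    exact N.smul_mem _ hn₀
  have hσ'fix : ∀ x ∈ N, σ' x = σ (p x) := by
    intro x hx
    show σ (πe (p x)) = σ (p x)
    congr 1
    have : p x ∈ N.map p := ⟨x, hx, rfl⟩
    rw [hI] at this
    obtain ⟨a, haa⟩ := Submodule.mem_span_singleton.1 this
    rw [← haa]
    show (a • e) • e = a • e
    rw [smul_eq_mul, smul_eq_mul, mul_assoc, he]
  refine ⟨Φ, fun x => ?_, fun x hx => ?_⟩
  · have h2 : ((0 : A), ρ₁ ((x - σ' x).2)) ∈ N :=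
      hN₀N (hinl _ (hρ₁mem _))
    exact N.add_mem (hσ'N x) h2
  · have hτx : τ x ∈ N₀ := ⟨x, hx, rfl⟩
    have hτ2 : (τ x).2 ∈ N₁ := ⟨τ x, hτx, rfl⟩
    have hfix2 : ρ₁ ((τ x).2) = (τ x).2 := hρ₁fix _ hτ2
    have hτ1 : (τ x).1 = 0 := hN₀ker _ hτx
    show σ' x + (0, ρ₁ ((x - σ' x).2)) = x
    have hxσ : x - σ' x = τ x := by
      rw [hσ'fix x hx]; rfl
    rw [hxσ, hfix2, hσ'fix x hx]
    have : ((0 : A), (τ x).2) = τ x := by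
      ext
      · exact hτ1.symm
      · rfl
    rw [this]
    show σ (p x) + (x - σ (p x)) = x
    abel

/-- The linear equivalence `(Fin (m+1) → A) ≃ₗ[A] A × (Fin m → A)`. -/
def finSuccLEquiv (m : ℕ) : (Fin (m + 1) → A) ≃ₗ[A] A × (Fin m → A) :=
  { (Fin.consEquiv fun _ : Fin (m + 1) => A).symm with
    map_add' := fun _ _ => rfl
    map_smul' := fun _ _ => rfl }

theorem hasRetraction_pi (hA : ∀ x : A, ∃ y, x = x * y * x) (m : ℕ)
    (N : Submodule A (Fin m → A)) (hN : N.FG) : HasRetraction N := by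
  induction m with
  | zero =>
    refine ⟨LinearMap.id, fun x => ?_, fun x _ => rfl⟩
    have : x = 0 := Subsingleton.elim x 0
    rw [LinearMap.id_apply, this]; exact N.zero_mem
  | succ m ih =>
    set eqv := (finSuccLEquiv (A := A) m) with heqv
    apply hasRetraction_of_map eqv.toLinearMap eqv.symm.toLinearMap
      (fun x => eqv.symm_apply_apply x)
    exact hasRetraction_prod hA (fun N' hN' => ih N' hN') _ (hN.map _)

theorem hasRetraction_of_fg (hA : ∀ x : A, ∃ y, x = x * y * x)
    {M : Type u} [AddCommGroup M] [Module A M] [Module.Finite A M]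
    [Module.Projective A M] (N : Submodule A M) (hN : N.FG) : HasRetraction N := by
  obtain ⟨m, π, hπ⟩ := Module.Finite.exists_fin' A M
  obtain ⟨i, hi⟩ := Module.projective_lifting_property π LinearMap.id hπ
  exact hasRetraction_of_map i π (fun x => LinearMap.congr_fun hi x) N
    (hasRetraction_pi hA m _ (hN.map i))

theorem projective_of_hasRetraction {M : Type u} [AddCommGroup M] [Module A M]
    [Module.Projective A M] {N : Submodule A M} (h : HasRetraction N) :
    Module.Projective A ↥N := by
  obtain ⟨ρ, hmem, hfix⟩ := h
  refine Module.Projective.of_split N.subtype (ρ.codRestrict N hmem) ?_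
  ext x
  exact hfix x.1 x.2

end VNRegular

open CategoryTheory CategoryTheory.Limits HomologicalComplex

section ComplexInfra
variable {A : Type u} [Ring A]
variable (K L : ChainComplex (ModuleCat.{u} A) ℤ)

/-- The cycles submodule in degree `n`. -/
def Zs (n : ℤ) : Submodule A (K.X n) := LinearMap.ker (K.d n (n-1)).hom

/-- The image of `d i j` inside `X j`. -/
def Bs (i j : ℤ) : Submodule A (K.X j) := LinearMap.range (K.d i j).hom

lemma Bs_congr {i i' : ℤ} (h : i = i') (j : ℤ) : Bs K i j = Bs K i' j := by subst h; rfl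

lemma d_apply_mem_Bs (i j : ℤ) (x : K.X i) : K.d i j x ∈ Bs K i j := ⟨x, rfl⟩

lemma d_eq_zero_of_mem_Zs {n : ℤ} {x : K.X n} (hx : x ∈ Zs K n) (k : ℤ) :
    K.d n k x = 0 := by
  by_cases h : (ComplexShape.down ℤ).Rel n k
  · have hk : k = n - 1 := by
      simp only [ComplexShape.down_Rel] at h; omega
    subst hk
    exact hx
  · rw [K.shape n k h]
    rfl

lemma d_d_mem_Zs (i n k : ℤ) (x : K.X i) : K.d i n x ∈ Zs K n :=
  ConcreteCategory.congr_hom (K.d_comp_d i n (n-1)) x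

lemma Bs_le_Zs (i n : ℤ) : Bs K i n ≤ Zs K n := by
  rintro _ ⟨x, rfl⟩
  exact d_d_mem_Zs K i n (n-1) x

lemma map_mem_Zs (f : K ⟶ L) {n : ℤ} {x : K.X n} (hx : x ∈ Zs K n) :
    f.f n x ∈ Zs L n := by
  show L.d n (n-1) (f.f n x) = 0
  have h := ConcreteCategory.congr_hom (f.comm n (n-1)) x
  -- h : (f.f n ≫ L.d n (n-1)) x = (K.d n (n-1) ≫ f.f (n-1)) x
  show (f.f n ≫ L.d n (n-1)) x = 0
  rw [h]
  show f.f (n-1) (K.d n (n-1) x) = 0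
  rw [show K.d n (n-1) x = 0 from hx, map_zero]

lemma rel_down (n : ℤ) : (ComplexShape.down ℤ).Rel n (n-1) := by
  simp only [ComplexShape.down_Rel]; omega

lemma rel_down' (n : ℤ) : (ComplexShape.down ℤ).Rel (n+1) n := by
  simp only [ComplexShape.down_Rel]

lemma Zs_eq_ker_g (n : ℤ) : Zs K n = LinearMap.ker ((K.sc n).g.hom) := by
  ext x
  have h := K.dFrom_eq (rel_down n)
  constructor
  · intro hx
    show K.dFrom n x = 0
    rw [h]
    show (K.xNextIso (rel_down n)).inv (K.d n (n-1) x) = 0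
    rw [show K.d n (n-1) x = 0 from hx, map_zero]
  · intro hx
    show K.d n (n-1) x = 0
    have h2 : K.d n (n-1) = K.dFrom n ≫ (K.xNextIso (rel_down n)).hom := by
      rw [h, Category.assoc, Iso.inv_hom_id, Category.comp_id]
    show (K.d n (n-1)) x = 0
    rw [h2]
    show (K.xNextIso (rel_down n)).hom (K.dFrom n x) = 0
    rw [show K.dFrom n x = 0 from hx, map_zero]

lemma range_dTo_eq (n : ℤ) : LinearMap.range (K.dTo n).hom = Bs K (n+1) n := by
  ext x
  have h := K.dTo_eq (rel_down' n)
  constructor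
  · rintro ⟨w, rfl⟩
    rw [h]
    exact ⟨(K.xPrevIso (rel_down' n)).hom w, rfl⟩
  · rintro ⟨w, rfl⟩
    refine ⟨(K.xPrevIso (rel_down' n)).inv w, ?_⟩
    rw [h]
    show K.d (n+1) n ((K.xPrevIso (rel_down' n)).hom ((K.xPrevIso (rel_down' n)).inv w))
      = K.d (n+1) n w
    congr 1
    exact ConcreteCategory.congr_hom ((K.xPrevIso (rel_down' n)).inv_hom_id) w

/-- The canonical projection from concrete cycles to abstract homology. -/
noncomputable def hpi (n : ℤ) : ↥(Zs K n) →ₗ[A] K.homology n :=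
  ((K.sc n).homologyπ.hom : (K.sc n).cycles →ₗ[A] (K.sc n).homology) ∘ₗ
    ((K.sc n).moduleCatCyclesIso.inv.hom :
      ModuleCat.of A (LinearMap.ker (K.sc n).g.hom) →ₗ[A] (K.sc n).cycles) ∘ₗ
    Submodule.inclusion (le_of_eq (Zs_eq_ker_g K n))

lemma hpi_surjective (n : ℤ) : Function.Surjective (hpi K n) := by
  have h1 : Function.Surjective ((K.sc n).homologyπ) :=
    (ModuleCat.epi_iff_surjective _).1 inferInstance
  have h2 : Function.Surjective ((K.sc n).moduleCatCyclesIso.inv) :=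
    (ModuleCat.epi_iff_surjective _).1 inferInstance
  have h3 : Function.Surjective (Submodule.inclusion (le_of_eq (Zs_eq_ker_g K n))) := by
    rintro ⟨y, hy⟩
    exact ⟨⟨y, (Zs_eq_ker_g K n).symm ▸ hy⟩, rfl⟩
  exact h1.comp (h2.comp h3)

lemma hpi_eq_zero_iff (n : ℤ) (z : ↥(Zs K n)) :
    hpi K n z = 0 ↔ (z : K.X n) ∈ Bs K (n+1) n := by
  set z' : ↥(LinearMap.ker (K.sc n).g.hom) := Submodule.inclusion (le_of_eq (Zs_eq_ker_g K n)) z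
  have key : hpi K n z = (K.sc n).moduleCatHomologyIso.inv ((K.sc n).moduleCatLeftHomologyData.π z') := by
    show ((K.sc n).moduleCatCyclesIso.inv ≫ (K.sc n).homologyπ) z' = _
    rw [(K.sc n).moduleCatCyclesIso_inv_π]
    rfl
  have hlem : ∀ y, (K.sc n).moduleCatHomologyIso.hom ((K.sc n).moduleCatHomologyIso.inv y) = y :=
    fun y => ConcreteCategory.congr_hom ((K.sc n).moduleCatHomologyIso.inv_hom_id) y
  have hinj : Function.Injective ((K.sc n).moduleCatHomologyIso.inv) := by
    intro a b hab
    have h2 := congrArg ((K.sc n).moduleCatHomologyIso.hom) hab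
    rw [hlem a, hlem b] at h2
    exact h2
  rw [key]
  constructor
  · intro h
    have h0 : (K.sc n).moduleCatLeftHomologyData.π z' = 0 := by
      apply hinj
      rw [h, map_zero]
      rfl
    have h0' : z' ∈ LinearMap.range (K.sc n).moduleCatToCycles :=
      (Submodule.Quotient.mk_eq_zero _).1 h0
    obtain ⟨w, hw⟩ := h0'
    have hww : (K.sc n).f w = (z : K.X n) := congrArg Subtype.val hw
    rw [← range_dTo_eq]
    exact ⟨w, hww⟩
  · intro h
    rw [← range_dTo_eq] at h
    obtain ⟨w, hw⟩ := h
    have h0 : (K.sc n).moduleCatLeftHomologyData.π z' = 0 :=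
      (Submodule.Quotient.mk_eq_zero _).2 ⟨w, Subtype.ext hw⟩
    rw [h0, map_zero]
    rfl

lemma hpi_naturality (f : K ⟶ L) (n : ℤ) (z : ↥(Zs K n)) :
    homologyMap f n (hpi K n z) = hpi L n ⟨f.f n z.1, map_mem_Zs K L f z.2⟩ := by
  have hz' : f.f n z.1 ∈ Zs L n := map_mem_Zs K L f z.2
  have hmono : Function.Injective ((L.sc n).iCycles) :=
    (ModuleCat.mono_iff_injective _).1 inferInstance
  set φ : K.sc n ⟶ L.sc n :=
    (shortComplexFunctor (ModuleCat.{u} A) (ComplexShape.down ℤ) n).map f with hφ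
  set cK := (K.sc n).moduleCatCyclesIso.inv
    (Submodule.inclusion (le_of_eq (Zs_eq_ker_g K n)) z) with hcK
  set cL := (L.sc n).moduleCatCyclesIso.inv
    (Submodule.inclusion (le_of_eq (Zs_eq_ker_g L n)) ⟨f.f n z.1, hz'⟩) with hcL
  have hcyc : ShortComplex.cyclesMap φ cK = cL := by
    apply hmono
    have e1 : (L.sc n).iCycles (ShortComplex.cyclesMap φ cK) = φ.τ₂ ((K.sc n).iCycles cK) :=
      ConcreteCategory.congr_hom (ShortComplex.cyclesMap_i φ) cK
    have e2 : (K.sc n).iCycles cK = (z : K.X n) :=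
      ConcreteCategory.congr_hom (K.sc n).moduleCatCyclesIso_inv_iCycles _
    have e3 : (L.sc n).iCycles cL = f.f n z.1 :=
      ConcreteCategory.congr_hom (L.sc n).moduleCatCyclesIso_inv_iCycles _
    rw [e1, e2, e3]
    rfl
  have hnat : ShortComplex.homologyMap φ ((K.sc n).homologyπ cK)
      = (L.sc n).homologyπ (ShortComplex.cyclesMap φ cK) :=
    ConcreteCategory.congr_hom ((K.sc n).homologyπ_naturality φ) cK
  show ShortComplex.homologyMap φ ((K.sc n).homologyπ cK) = (L.sc n).homologyπ cL
  rw [hnat, hcyc]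

end ComplexInfra

section MainLemma
variable {A : Type u} [Ring A]

theorem main_full_faithful (hA : ∀ x : A, ∃ y, x = x * y * x)
    (P Q : ChainComplex (ModuleCat.{u} A) ℤ)
    (hfin : ∀ n : ℤ, Module.Finite A (P.X n))
    (hproj : ∀ n : ℤ, Module.Projective A (P.X n)) :
    (∀ f g : P ⟶ Q, (∀ n : ℤ, homologyMap f n = homologyMap g n) → Nonempty (Homotopy f g)) ∧
      ∀ φ : ∀ n : ℤ, P.homology n ⟶ Q.homology n,
        ∃ f : P ⟶ Q, ∀ n : ℤ, homologyMap f n = φ n := by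
  classical
  have key : ∀ (n : ℤ) (N : Submodule A (P.X n)), N.FG → HasRetraction N := by
    intro n N hN
    haveI := hfin n
    haveI := hproj n
    exact hasRetraction_of_fg hA N hN
  have hBsFG : ∀ i j : ℤ, (Bs P i j).FG := by
    intro i j
    haveI := hfin i
    show (LinearMap.range (P.d i j).hom).FG
    rw [LinearMap.range_eq_map]
    exact (Module.finite_def.mp (hfin i)).map _
  have hBsProj : ∀ i j : ℤ, Module.Projective A ↥(Bs P i j) := by
    intro i j
    haveI := hproj j
    exact projective_of_hasRetraction (key j _ (hBsFG i j))
  -- sections of the differentials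
  have hTex : ∀ i j : ℤ, ∃ T : ↥(Bs P i j) →ₗ[A] P.X i, ∀ b, P.d i j (T b) = b.1 := by
    intro i j
    haveI := hBsProj i j
    obtain ⟨T, hT⟩ := Module.projective_lifting_property
      ((P.d i j).hom.rangeRestrict)
      (LinearMap.id : ↥(Bs P i j) →ₗ[A] ↥(Bs P i j))
      (LinearMap.surjective_rangeRestrict _)
    refine ⟨T, fun b => ?_⟩
    have h1 := LinearMap.congr_fun hT b
    exact congrArg Subtype.val h1
  choose T hT using hTex
  -- the projection onto cycles
  have hrex : ∀ n : ℤ, ∃ r : P.X n →ₗ[A] ↥(Zs P n),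
      (∀ (x : P.X n) (hx : x ∈ Zs P n), r x = ⟨x, hx⟩) ∧
      (∀ x : P.X n, (r x : P.X n)
        = x - T n (n-1) ((P.d n (n-1)).hom.rangeRestrict x)) := by
    intro n
    refine ⟨LinearMap.codRestrict (Zs P n)
      (LinearMap.id - (T n (n-1)) ∘ₗ (P.d n (n-1)).hom.rangeRestrict)
      ?_, ?_, fun x => by
        rw [LinearMap.codRestrict_apply]
        simp only [LinearMap.sub_apply, LinearMap.comp_apply, LinearMap.id_apply]
        rfl⟩
    · intro x
      show P.d n (n-1) (x - T n (n-1) _) = 0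
      rw [map_sub, hT]
      exact sub_self _
    · intro x hx
      apply Subtype.ext
      show x - T n (n-1) ((P.d n (n-1)).hom.rangeRestrict x) = x
      have hb : (P.d n (n-1)).hom.rangeRestrict x = 0 :=
        Subtype.ext (by exact hx)
      rw [hb]
      exact sub_eq_self.mpr (map_zero (T n (n-1)))
  choose r hrfix hrval using hrex
  have hZsProj : ∀ n : ℤ, Module.Projective A ↥(Zs P n) := by
    intro n
    haveI := hproj n
    refine Module.Projective.of_split (Zs P n).subtype (r n) ?_
    ext z
    show ((r n z.1) : P.X n) = z.1
    rw [hrfix n z.1 z.2]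
  have hρex : ∀ n : ℤ, HasRetraction (Bs P (n+1) n) := fun n => key n _ (hBsFG (n+1) n)
  choose ρ hρmem hρfix using hρex
  set Bz : ∀ n : ℤ, Submodule A ↥(Zs P n) :=
    fun n => (Bs P (n+1) n).comap (Zs P n).subtype with hBz
  -- the splitting s of the quotient map
  have hsex : ∀ n : ℤ, ∃ s : (↥(Zs P n) ⧸ Bz n) →ₗ[A] ↥(Zs P n),
      (∀ h, (Bz n).mkQ (s h) = h) ∧
      (∀ z : ↥(Zs P n), (s ((Bz n).mkQ z) : P.X n) = z.1 - ρ n z.1) := by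
    intro n
    have hmem : ∀ z : ↥(Zs P n), z.1 - ρ n z.1 ∈ Zs P n :=
      fun z => (Zs P n).sub_mem z.2 (Bs_le_Zs P (n+1) n (hρmem n z.1))
    set sEndo : ↥(Zs P n) →ₗ[A] ↥(Zs P n) :=
      LinearMap.codRestrict (Zs P n)
        ((Zs P n).subtype - (ρ n) ∘ₗ (Zs P n).subtype) (fun z => hmem z) with hsE
    have hvan : ∀ z ∈ Bz n, sEndo z = 0 := by
      intro z hz
      apply Subtype.ext
      show z.1 - ρ n z.1 = 0
      rw [hρfix n z.1 hz, sub_self]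
    refine ⟨(Bz n).liftQ sEndo (fun z hz => hvan z hz), ?_, fun z => rfl⟩
    intro h
    obtain ⟨z, rfl⟩ := Submodule.Quotient.mk_surjective _ h
    show (Bz n).mkQ (sEndo z) = (Bz n).mkQ z
    rw [← sub_eq_zero, ← map_sub, Submodule.mkQ_apply, Submodule.Quotient.mk_eq_zero]
    show (sEndo z - z : ↥(Zs P n)).1 ∈ Bs P (n+1) n
    have : (sEndo z - z : ↥(Zs P n)).1 = -(ρ n z.1) := by
      show (z.1 - ρ n z.1) - z.1 = -(ρ n z.1)
      abel
    rw [this]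
    exact (Bs P (n+1) n).neg_mem (hρmem n z.1)
  choose s hsmk hsval using hsex
  -- q : corestriction of (1 - s ∘ mkQ) to boundaries
  have hqex : ∀ i j : ℤ, (ComplexShape.down ℤ).Rel j i →
      ∃ q : ↥(Zs P i) →ₗ[A] ↥(Bs P j i),
        ∀ z, (q z : P.X i) = z.1 - (s i ((Bz i).mkQ z) : P.X i) := by
    intro i j hij
    have hji : j = i + 1 := by
      simp only [ComplexShape.down_Rel] at hij; omega
    refine ⟨LinearMap.codRestrict (Bs P j i)
      ((Zs P i).subtype ∘ₗ (LinearMap.id - (s i) ∘ₗ (Bz i).mkQ)) ?_, fun z => by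
        rw [LinearMap.codRestrict_apply]
        simp only [LinearMap.sub_apply, LinearMap.comp_apply, LinearMap.id_apply,
          LinearMap.coe_comp, Function.comp_apply, Submodule.coe_subtype]
        rfl⟩
    intro z
    show (z - s i ((Bz i).mkQ z) : ↥(Zs P i)).1 ∈ Bs P j i
    rw [Bs_congr P hji]
    have hz0 : (Bz i).mkQ (z - s i ((Bz i).mkQ z)) = 0 := by
      rw [map_sub, hsmk, sub_self]
    rw [Submodule.mkQ_apply, Submodule.Quotient.mk_eq_zero] at hz0
    exact hz0
  choose q hqval using hqex
  constructor
  · -- injectivity: equal homology maps ⇒ homotopic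
    intro f0 g0 hfg
    set u : P ⟶ Q := f0 - g0 with hu
    have huf : ∀ (n : ℤ) (x : P.X n), u.f n x = f0.f n x - g0.f n x := by
      intro n x
      rw [hu]
      rfl
    have hub : ∀ (n : ℤ) (z : ↥(Zs P n)), u.f n z.1 ∈ Bs Q (n+1) n := by
      intro n z
      have hmem : u.f n z.1 ∈ Zs Q n := map_mem_Zs P Q u z.2
      have e1 : (⟨u.f n z.1, hmem⟩ : ↥(Zs Q n))
          = ⟨f0.f n z.1, map_mem_Zs P Q f0 z.2⟩ - ⟨g0.f n z.1, map_mem_Zs P Q g0 z.2⟩ :=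
        Subtype.ext (huf n z.1)
      have e2 : hpi Q n ⟨u.f n z.1, hmem⟩ = 0 := by
        rw [e1, map_sub, ← hpi_naturality P Q f0 n z, ← hpi_naturality P Q g0 n z,
          hfg n, sub_self]
      exact (hpi_eq_zero_iff Q n ⟨u.f n z.1, hmem⟩).1 e2
    have hMex : ∀ i j : ℤ, (ComplexShape.down ℤ).Rel j i →
        ∃ M : (↥(Zs P i) ⧸ Bz i) →ₗ[A] Q.X j,
          ∀ x, Q.d j i (M x) = u.f i ((s i x) : P.X i) := by
      intro i j hij
      have hji : j = i + 1 := by simp only [ComplexShape.down_Rel] at hij; omega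
      haveI : Module.Projective A (↥(Zs P i) ⧸ Bz i) := by
        haveI := hZsProj i
        exact Module.Projective.of_split (s i) (Bz i).mkQ
          (LinearMap.ext fun h => hsmk i h)
      have hmem : ∀ x, u.f i ((s i x) : P.X i) ∈ Bs Q j i := by
        intro x
        rw [Bs_congr Q hji]
        exact hub i (s i x)
      obtain ⟨M, hM⟩ := Module.projective_lifting_property
        ((Q.d j i).hom.rangeRestrict)
        (LinearMap.codRestrict (Bs Q j i)
          ((u.f i).hom ∘ₗ (Zs P i).subtype ∘ₗ (s i)) hmem)
        (LinearMap.surjective_rangeRestrict _)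
      refine ⟨M, fun x => ?_⟩
      exact congrArg Subtype.val (LinearMap.congr_fun hM x)
    choose M hM using hMex
    set hcmp : ∀ i j : ℤ, (ComplexShape.down ℤ).Rel j i → (P.X i ⟶ Q.X j) :=
      fun i j hij =>
        ModuleCat.ofHom ((((u.f j).hom ∘ₗ (T j i) ∘ₗ (q i j hij) ∘ₗ (r i))
          + ((M i j hij) ∘ₗ (Bz i).mkQ ∘ₗ (r i)) : P.X i →ₗ[A] Q.X j)) with hhcmp
    have hPropA : ∀ (i j : ℤ) (hij : (ComplexShape.down ℤ).Rel j i) (x : P.X i),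
        Q.d j i (hcmp i j hij x) = u.f i ((r i x) : P.X i) := by
      intro i j hij x
      have e0 : hcmp i j hij x
          = u.f j (T j i (q i j hij (r i x))) + M i j hij ((Bz i).mkQ (r i x)) := rfl
      rw [e0, map_add]
      have e1 : Q.d j i (u.f j (T j i (q i j hij (r i x))))
          = u.f i (P.d j i (T j i (q i j hij (r i x)))) :=
        ConcreteCategory.congr_hom (u.comm j i) (T j i (q i j hij (r i x)))
      rw [e1, hT, hM, ← map_add]
      congr 1
      rw [hqval]
      exact sub_add_cancel _ _
    set hom : ∀ i j : ℤ, P.X i ⟶ Q.X j :=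
      fun i j => if h : (ComplexShape.down ℤ).Rel j i then hcmp i j h else 0 with hhom
    have hev : ∀ (i j : ℤ) (h : (ComplexShape.down ℤ).Rel j i), hom i j = hcmp i j h :=
      fun i j h => dif_pos h
    refine ⟨Homotopy.equivSubZero.symm ?_⟩
    refine ⟨hom, fun i j h => dif_neg h, ?_⟩
    intro n
    rw [dNext_eq hom (rel_down n), prevD_eq hom (rel_down' n),
      hev _ _ (rel_down n), hev _ _ (rel_down' n)]
    refine ConcreteCategory.hom_ext _ _ fun x => ?_
    show u.f n x = hcmp (n-1) n (rel_down n) (P.d n (n-1) x)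
      + Q.d (n+1) n (hcmp n (n+1) (rel_down' n) x) + (0 : P ⟶ Q).f n x
    have hz0 : (0 : P ⟶ Q).f n x = 0 := by
      have h00 : (0 : P ⟶ Q).f n = 0 := rfl
      rw [h00]
      rfl
    have t2 : Q.d (n+1) n (hcmp n (n+1) (rel_down' n) x) = u.f n ((r n x) : P.X n) :=
      hPropA n (n+1) (rel_down' n) x
    have hyZ : P.d n (n-1) x ∈ Zs P (n-1) := d_d_mem_Zs P n (n-1) 0 x
    have e1 : r (n-1) (P.d n (n-1) x) = ⟨P.d n (n-1) x, hyZ⟩ := hrfix (n-1) _ hyZ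
    have hyB : P.d n (n-1) x ∈ Bs P ((n-1)+1) (n-1) := by
      rw [Bs_congr P (show ((n-1)+1 : ℤ) = n by omega)]
      exact d_apply_mem_Bs P n (n-1) x
    have e2 : (Bz (n-1)).mkQ ⟨P.d n (n-1) x, hyZ⟩ = 0 := by
      rw [Submodule.mkQ_apply, Submodule.Quotient.mk_eq_zero]
      exact hyB
    have e3 : q (n-1) n (rel_down n) ⟨P.d n (n-1) x, hyZ⟩
        = (P.d n (n-1)).hom.rangeRestrict x := by
      apply Subtype.ext
      rw [hqval, e2, map_zero]
      show P.d n (n-1) x - ((0 : ↥(Zs P (n-1))) : P.X (n-1)) = _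
      rw [Submodule.coe_zero, sub_zero]
      rfl
    have t1 : hcmp (n-1) n (rel_down n) (P.d n (n-1) x)
        = u.f n (T n (n-1) ((P.d n (n-1)).hom.rangeRestrict x)) := by
      show u.f n (T n (n-1) (q (n-1) n (rel_down n) (r (n-1) (P.d n (n-1) x))))
        + M (n-1) n (rel_down n) ((Bz (n-1)).mkQ (r (n-1) (P.d n (n-1) x))) = _
      rw [e1, e2, e3, map_zero, add_zero]
    rw [t1, t2, hz0, hrval n x, map_sub]
    abel
  · -- surjectivity
    intro φ
    have hLex : ∀ n : ℤ, ∃ Lf : ↥(Zs P n) →ₗ[A] ↥(Zs Q n),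
        ∀ z, hpi Q n (Lf z) = φ n (hpi P n z) := by
      intro n
      haveI := hZsProj n
      obtain ⟨Lf, hLf⟩ := Module.projective_lifting_property (hpi Q n)
        ((φ n).hom ∘ₗ hpi P n) (hpi_surjective Q n)
      exact ⟨Lf, fun z => LinearMap.congr_fun hLf z⟩
    choose Lf hLf using hLex
    have hjex : ∀ n : ℤ, ∃ jmf : ↥(Zs P n) →ₗ[A] ↥(Zs P n),
        (∀ z : ↥(Zs P n), z.1 ∈ Bs P (n+1) n → jmf z = 0) ∧
        (∀ z, hpi P n (jmf z) = hpi P n z) := by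
      intro n
      have hmem : ∀ z : ↥(Zs P n), z.1 - ρ n z.1 ∈ Zs P n :=
        fun z => (Zs P n).sub_mem z.2 (Bs_le_Zs P (n+1) n (hρmem n z.1))
      refine ⟨LinearMap.codRestrict (Zs P n)
        ((Zs P n).subtype - (ρ n) ∘ₗ (Zs P n).subtype) (fun z => hmem z),
        fun z hz => ?_, fun z => ?_⟩
      · apply Subtype.ext
        show z.1 - ρ n z.1 = ((0 : ↥(Zs P n)) : P.X n)
        rw [hρfix n z.1 hz, sub_self, Submodule.coe_zero]
      · have hmem2 : ((LinearMap.codRestrict (Zs P n)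
            ((Zs P n).subtype - (ρ n) ∘ₗ (Zs P n).subtype) (fun z => hmem z)) z - z
            : ↥(Zs P n)).1 ∈ Bs P (n+1) n := by
          show (z.1 - ρ n z.1) - z.1 ∈ _
          have heq : (z.1 - ρ n z.1) - z.1 = -(ρ n z.1) := by abel
          rw [heq]
          exact (Bs P (n+1) n).neg_mem (hρmem n z.1)
        have h0 := (hpi_eq_zero_iff P n _).2 hmem2
        rw [map_sub] at h0
        exact sub_eq_zero.mp h0
    choose jmf hjm0 hjmπ using hjex
    have hcomm : ∀ i j : ℤ, (ComplexShape.down ℤ).Rel i j →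
        ((ModuleCat.ofHom (((Zs Q i).subtype ∘ₗ (Lf i) ∘ₗ (jmf i) ∘ₗ (r i)) : P.X i →ₗ[A] Q.X i) : P.X i ⟶ Q.X i) ≫ Q.d i j)
          = P.d i j ≫ (ModuleCat.ofHom (((Zs Q j).subtype ∘ₗ (Lf j) ∘ₗ (jmf j) ∘ₗ (r j)) : P.X j →ₗ[A] Q.X j) : P.X j ⟶ Q.X j) := by
      intro i j hij
      have hij' : j + 1 = i := hij
      subst hij'
      refine ConcreteCategory.hom_ext _ _ fun x => ?_
      show Q.d (j+1) j ((Zs Q (j+1)).subtype (Lf (j+1) (jmf (j+1) (r (j+1) x))))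
        = (Zs Q j).subtype (Lf j (jmf j (r j (P.d (j+1) j x))))
      have h1 : Q.d (j+1) j ((Zs Q (j+1)).subtype (Lf (j+1) (jmf (j+1) (r (j+1) x)))) = 0 :=
        d_eq_zero_of_mem_Zs Q (Lf (j+1) (jmf (j+1) (r (j+1) x))).2 j
      have hyZ : P.d (j+1) j x ∈ Zs P j := d_d_mem_Zs P (j+1) j 0 x
      have h2 : r j (P.d (j+1) j x) = ⟨P.d (j+1) j x, hyZ⟩ := hrfix j _ hyZ
      rw [h1, h2, hjm0 j ⟨_, hyZ⟩ (d_apply_mem_Bs P (j+1) j x), map_zero, map_zero]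
    set fm : P ⟶ Q := ⟨fun n =>
      (ModuleCat.ofHom (((Zs Q n).subtype ∘ₗ (Lf n) ∘ₗ (jmf n) ∘ₗ (r n)) : P.X n →ₗ[A] Q.X n) : P.X n ⟶ Q.X n),
      fun i j hij => hcomm i j hij⟩ with hfm
    refine ⟨fm, ?_⟩
    intro n
    refine ConcreteCategory.hom_ext _ _ fun h => ?_
    obtain ⟨z, rfl⟩ := hpi_surjective P n h
    rw [hpi_naturality P Q fm n z]
    have e0 : r n z.1 = z := hrfix n z.1 z.2
    have e1 : (⟨fm.f n z.1, map_mem_Zs P Q fm z.2⟩ : ↥(Zs Q n)) = Lf n (jmf n z) :=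
      Subtype.ext (by
        show (Zs Q n).subtype (Lf n (jmf n (r n z.1))) = (Lf n (jmf n z) : Q.X n)
        rw [e0]
        rfl)
    rw [e1, hLf, hjmπ]

end MainLemma

theorem homology_full_faithful_of_vonNeumannRegular (R : Type u) [Ring R]
    (hvnr : ∀ x : R, ∃ y : R, x = x * y * x)
    (P : ChainComplex (ModuleCat.{u} Rᵐᵒᵖ) ℤ) (hP : IsPerfect R P)
    (Q : ChainComplex (ModuleCat.{u} Rᵐᵒᵖ) ℤ) :
    HomologyFullFaithful R P Q := by
  have hA : ∀ x : Rᵐᵒᵖ, ∃ y : Rᵐᵒᵖ, x = x * y * x := by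
    intro x
    obtain ⟨y, hy⟩ := hvnr x.unop
    refine ⟨MulOpposite.op y, ?_⟩
    apply MulOpposite.unop_injective
    simp only [MulOpposite.unop_mul, MulOpposite.unop_op]
    rw [← mul_assoc]
    exact hy
  exact main_full_faithful hA P Q (fun n => (hP.2 n).1) (fun n => (hP.2 n).2)
end

section
/- Let R be a ring and M a right R-module. Then M is isomorphic to a homology module H_n(P) of some bounded chain complex P of finitely generated projective right R-modules if and only if there exist a finitely presented right R-module F, an injective R-module homomorphism M → F, and an injective R-module homomorphism from the quotient F/M into some projective right R-module. Moreover, in this case there is such a complex P with P_n = 0 unless n ∈ {0,1,2} and M ≅ H_1(P). -/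
open CategoryTheory CategoryTheory.Limits HomologicalComplex TensorProduct

universe u

section Helpers
variable {A : Type u} [Ring A]
def tX (X0 X1 X2 : ModuleCat.{u} A) : ℤ → ModuleCat.{u} A
  | 0 => X0
  | 1 => X1
  | 2 => X2
  | _ => ModuleCat.of A PUnit

def tD (X0 X1 X2 : ModuleCat.{u} A) (f : X2 ⟶ X1) (g : X1 ⟶ X0) :
    ∀ i j : ℤ, tX X0 X1 X2 i ⟶ tX X0 X1 X2 j
  | 2, 1 => f
  | 1, 0 => g
  | _, _ => 0

def threeComplex (X0 X1 X2 : ModuleCat.{u} A) (f : X2 ⟶ X1) (g : X1 ⟶ X0)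
    (w : f ≫ g = 0) : ChainComplex (ModuleCat.{u} A) ℤ where
  X := tX X0 X1 X2
  d := tD X0 X1 X2 f g
  shape i j h := by
    simp only [ComplexShape.down_Rel] at h
    unfold tD
    split
    · omega
    · omega
    · rcases i with ((_|_|_|i)|i) <;> rcases j with ((_|_|j)|j) <;> first | rfl | simp_all
  d_comp_d' i j k hij hjk := by
    simp only [ComplexShape.down_Rel] at hij hjk
    unfold tD
    split
    · obtain rfl : k = 0 := by omega
      exact w
    · obtain rfl : k = -1 := by omega
      show g ≫ 0 = 0
      simp
    · rcases i with ((_|_|_|i)|i) <;> rcases j with ((_|_|j)|j) <;> first | exact zero_comp | simp_all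

lemma tX_isZero (X0 X1 X2 : ModuleCat.{u} A) (n : ℤ) (h0 : n ≠ 0) (h1 : n ≠ 1) (h2 : n ≠ 2) :
    IsZero (tX X0 X1 X2 n) := by
  have : tX X0 X1 X2 n = ModuleCat.of A PUnit := by
    unfold tX
    split <;> first | rfl | omega
  rw [this]
  exact ModuleCat.isZero_of_subsingleton _

lemma tX_cases (X0 X1 X2 : ModuleCat.{u} A) (n : ℤ) :
    tX X0 X1 X2 n = X0 ∨ tX X0 X1 X2 n = X1 ∨ tX X0 X1 X2 n = X2 ∨
      tX X0 X1 X2 n = ModuleCat.of A PUnit := by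
  unfold tX
  split <;> simp


noncomputable def SHequiv (S : ShortComplex (ModuleCat.{u} A)) :
    (S.homology : Type u) ≃ₗ[A] (LinearMap.ker S.g.hom ⧸ LinearMap.range S.moduleCatToCycles) :=
  S.moduleCatHomologyIso.toLinearEquiv

noncomputable def homologyEquivSc' (P : ChainComplex (ModuleCat.{u} A) ℤ) (n : ℤ) :
    (P.homology n : Type u) ≃ₗ[A] ((P.sc' (n+1) n (n-1)).homology : Type u) :=
  (P.homologyIsoSc' (n+1) n (n-1)
    ((ComplexShape.down ℤ).prev_eq' (by simp))
    ((ComplexShape.down ℤ).next_eq' (by simp))).toLinearEquiv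


theorem partA {M : Type u} [AddCommGroup M] [Module A M]
    (S : ShortComplex (ModuleCat.{u} A)) (h1 : Module.Finite A S.X₁)
    (h2f : Module.Finite A S.X₂) (h2p : Module.Projective A S.X₂)
    (h3p : Module.Projective A S.X₃)
    (e : M ≃ₗ[A] (LinearMap.ker S.g.hom ⧸ LinearMap.range S.moduleCatToCycles)) :
    ∃ F : ModuleCat.{u} A, Module.FinitePresentation A F ∧
      ∃ i : M →ₗ[A] F, Function.Injective i ∧
        ∃ Pr : ModuleCat.{u} A, Module.Projective A Pr ∧
          ∃ j : (F ⧸ LinearMap.range i) →ₗ[A] Pr, Function.Injective j := by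
  classical
  set N : Submodule A S.X₂ := LinearMap.range S.f.hom with hN
  refine ⟨ModuleCat.of A (S.X₂ ⧸ N), ?_, ?_⟩
  · haveI := Module.finitePresentation_of_projective A S.X₂
    refine Module.finitePresentation_of_surjective N.mkQ N.mkQ_surjective ?_
    rw [Submodule.ker_mkQ, hN, LinearMap.range_eq_map]
    exact Submodule.FG.map _ (Module.finite_def.mp h1)
  · have hle : LinearMap.range S.moduleCatToCycles ≤
        LinearMap.ker (N.mkQ ∘ₗ (LinearMap.ker S.g.hom).subtype) := by
      rintro x ⟨a, rfl⟩
      simp only [LinearMap.mem_ker, LinearMap.comp_apply, Submodule.subtype_apply,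
        Submodule.mkQ_apply]
      rw [Submodule.Quotient.mk_eq_zero]
      exact ⟨a, rfl⟩
    set φ : (LinearMap.ker S.g.hom ⧸ LinearMap.range S.moduleCatToCycles) →ₗ[A] (S.X₂ ⧸ N) :=
      Submodule.liftQ _ (N.mkQ ∘ₗ (LinearMap.ker S.g.hom).subtype) hle with hφ
    have hkerφ : LinearMap.ker (N.mkQ ∘ₗ (LinearMap.ker S.g.hom).subtype) =
        LinearMap.range S.moduleCatToCycles := by
      apply le_antisymm _ hle
      rintro ⟨x, hx⟩ hmem
      simp only [LinearMap.mem_ker, LinearMap.comp_apply, Submodule.subtype_apply,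
        Submodule.mkQ_apply, Submodule.Quotient.mk_eq_zero] at hmem
      obtain ⟨a, ha⟩ := hmem
      exact ⟨a, Subtype.ext ha⟩
    have hφinj : Function.Injective φ := by
      rw [← LinearMap.ker_eq_bot, hφ]
      exact Submodule.ker_liftQ_eq_bot _ _ _ hkerφ.le
    set i : M →ₗ[A] (S.X₂ ⧸ N) := φ ∘ₗ (e : M →ₗ[A] _) with hi
    have hrangei : LinearMap.range i = (LinearMap.ker S.g.hom).map N.mkQ := by
      rw [hi, LinearMap.range_comp, LinearEquiv.range, Submodule.map_top, hφ,
        Submodule.range_liftQ, LinearMap.range_comp, Submodule.range_subtype]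
    -- ψ : S.X₂ ⧸ N →ₗ S.X₃ induced by S.g
    have hNg : N ≤ LinearMap.ker S.g.hom := by
      rintro x ⟨a, rfl⟩
      exact S.moduleCat_zero_apply a
    set ψ : (S.X₂ ⧸ N) →ₗ[A] S.X₃ := Submodule.liftQ N S.g.hom hNg with hψ
    have hkerψ : LinearMap.ker ψ = LinearMap.range i := by
      rw [hψ, Submodule.ker_liftQ, hrangei]
    refine ⟨i, hφinj.comp e.injective, S.X₃, h3p,
      Submodule.liftQ _ ψ hkerψ.ge, ?_⟩
    rw [← LinearMap.ker_eq_bot]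
    exact Submodule.ker_liftQ_eq_bot _ _ _ hkerψ.le

theorem partB {M : Type u} [AddCommGroup M] [Module A M]
    (F : ModuleCat.{u} A) (hF : Module.FinitePresentation A F)
    (i : M →ₗ[A] F) (hi : Function.Injective i)
    (Pr : ModuleCat.{u} A) (hPr : Module.Projective A Pr)
    (j : (F ⧸ LinearMap.range i) →ₗ[A] Pr) (hj : Function.Injective j) :
    ∃ S : ShortComplex (ModuleCat.{u} A),
      (Module.Finite A S.X₁ ∧ Module.Projective A S.X₁) ∧
      (Module.Finite A S.X₂ ∧ Module.Projective A S.X₂) ∧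
      (Module.Finite A S.X₃ ∧ Module.Projective A S.X₃) ∧
      Nonempty (M ≃ₗ[A] (LinearMap.ker S.g.hom ⧸ LinearMap.range S.moduleCatToCycles)) := by
  classical
  haveI := hF
  obtain ⟨L, _, _, K, eL, hLfree, hLfin, hKfg⟩ := Module.FinitePresentation.equiv_quotient A F
  set π : L →ₗ[A] F := (eL.symm : (L ⧸ K) →ₗ[A] F) ∘ₗ K.mkQ with hπ
  have hπs : Function.Surjective π := eL.symm.surjective.comp K.mkQ_surjective
  have hkerπ : LinearMap.ker π = K := by
    rw [hπ, LinearMap.ker_comp, LinearEquiv.ker, Submodule.comap_bot, Submodule.ker_mkQ]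
  haveI : Module.Finite A K := Module.Finite.iff_fg.mpr hKfg
  obtain ⟨m, ρ, hρ⟩ := Module.Finite.exists_fin' A K
  set d₂ : (Fin m → A) →ₗ[A] L := K.subtype ∘ₗ ρ with hd₂
  have hranged₂ : LinearMap.range d₂ = K := by
    rw [hd₂, LinearMap.range_comp, LinearMap.range_eq_top.mpr hρ, Submodule.map_top,
      Submodule.range_subtype]
  -- embedding of F ⧸ range i into a finite free module
  obtain ⟨s, hs⟩ := Module.projective_def.mp hPr
  have hsinj : Function.Injective s := hs.injective
  set h : (F ⧸ LinearMap.range i) →ₗ[A] (Pr →₀ A) := s ∘ₗ j with hh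
  have hhinj : Function.Injective h := hsinj.comp hj
  obtain ⟨t0, ht0⟩ := Module.finite_def.mp (inferInstance : Module.Finite A (F ⧸ LinearMap.range i))
  set t : Finset Pr := (t0.image h).sup Finsupp.support with ht
  have hmem : ∀ q : F ⧸ LinearMap.range i, h q ∈ Finsupp.supported A A (↑t : Set Pr) := by
    intro q
    have hq : h q ∈ Submodule.map h (Submodule.span A (↑t0 : Set _)) := by
      rw [ht0]; exact ⟨q, trivial, rfl⟩
    rw [Submodule.map_span] at hq
    refine Submodule.span_le.mpr ?_ hq
    rintro y ⟨x, hx, rfl⟩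
    simp only [SetLike.mem_coe, Finsupp.mem_supported]
    intro p hp
    exact Finset.mem_coe.mpr
      ((Finset.le_sup (Finset.mem_image_of_mem h hx) : (h x).support ≤ t) hp)
  set emb : (F ⧸ LinearMap.range i) →ₗ[A] ((↑t : Set Pr) →₀ A) :=
    (Finsupp.supportedEquivFinsupp (M := A) (R := A) (↑t : Set Pr)).toLinearMap ∘ₗ
      LinearMap.codRestrict (Finsupp.supported A A (↑t : Set Pr)) h hmem with hemb
  have hembinj : Function.Injective emb := by
    refine (Finsupp.supportedEquivFinsupp (M := A) (R := A) (↑t : Set Pr)).injective.comp ?_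
    intro x y hxy
    exact hhinj (congrArg Subtype.val hxy)
  set d₁ : L →ₗ[A] ((↑t : Set Pr) →₀ A) := emb ∘ₗ (LinearMap.range i).mkQ ∘ₗ π with hd₁
  have w : d₁ ∘ₗ d₂ = 0 := by
    apply LinearMap.ext; intro v
    have hπ0 : π (d₂ v) = 0 := by
      rw [← LinearMap.mem_ker, hkerπ]; exact (ρ v).2
    show emb ((LinearMap.range i).mkQ (π (d₂ v))) = 0
    rw [hπ0, map_zero, map_zero]
  have wzero : ModuleCat.ofHom d₂ ≫ ModuleCat.ofHom d₁ = 0 := by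
    show ModuleCat.ofHom (d₁ ∘ₗ d₂) = 0
    rw [w]; rfl
  refine ⟨ShortComplex.mk (ModuleCat.ofHom d₂) (ModuleCat.ofHom d₁) wzero,
    ⟨(inferInstance : Module.Finite A (Fin m → A)),
     (inferInstance : Module.Projective A (Fin m → A))⟩,
    ⟨hLfin, by haveI := hLfree; exact (inferInstance : Module.Projective A L)⟩,
    ⟨(inferInstance : Module.Finite A ((↑t : Set Pr) →₀ A)),
     (inferInstance : Module.Projective A ((↑t : Set Pr) →₀ A))⟩, ⟨?_⟩⟩
  -- now construct M ≃ₗ ker d₁ ⧸ range toCycles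
  set S₀ := ShortComplex.mk (ModuleCat.ofHom d₂) (ModuleCat.ofHom d₁) wzero with hS₀
  have hkerd₁ : ∀ x : L, d₁ x = 0 ↔ π x ∈ LinearMap.range i := by
    intro x
    constructor
    · intro hx
      have : emb ((LinearMap.range i).mkQ (π x)) = emb 0 := by
        rw [map_zero]; exact hx
      have := hembinj this
      rwa [← Submodule.Quotient.mk_eq_zero, ← Submodule.mkQ_apply]
    · intro hx
      show emb ((LinearMap.range i).mkQ (π x)) = 0
      rw [Submodule.mkQ_apply, (Submodule.Quotient.mk_eq_zero _).mpr hx, map_zero]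
  have hθ₀mem : ∀ x : LinearMap.ker S₀.g.hom, π x.1 ∈ LinearMap.range i := by
    intro x; exact (hkerd₁ x.1).mp x.2
  set eI : M ≃ₗ[A] LinearMap.range i := LinearEquiv.ofInjective i hi with heI
  set θ : LinearMap.ker S₀.g.hom →ₗ[A] M :=
    (eI.symm : LinearMap.range i →ₗ[A] M) ∘ₗ
      LinearMap.codRestrict (LinearMap.range i) (π ∘ₗ (LinearMap.ker S₀.g.hom).subtype)
        hθ₀mem with hθ
  have hθapp : ∀ x : LinearMap.ker S₀.g.hom, θ x = eI.symm ⟨π x.1, hθ₀mem x⟩ := fun x => rfl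
  have hθsurj : Function.Surjective θ := by
    intro mm
    obtain ⟨x, hx⟩ := hπs (i mm)
    have hxker : x ∈ LinearMap.ker S₀.g.hom := by
      show d₁ x = 0
      rw [hkerd₁]
      exact hx ▸ ⟨mm, rfl⟩
    refine ⟨⟨x, hxker⟩, ?_⟩
    rw [hθapp, LinearEquiv.symm_apply_eq, heI]
    apply Subtype.ext
    rw [LinearEquiv.ofInjective_apply]
    exact hx
  have hkerθ : LinearMap.range S₀.moduleCatToCycles = LinearMap.ker θ := by
    ext x
    constructor
    · rintro ⟨a, rfl⟩
      rw [LinearMap.mem_ker, hθapp, LinearEquiv.symm_apply_eq, map_zero]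
      apply Subtype.ext
      show π (d₂ a) = 0
      rw [← LinearMap.mem_ker, hkerπ]
      exact (ρ a).2
    · intro hx
      rw [LinearMap.mem_ker, hθapp, LinearEquiv.symm_apply_eq, map_zero] at hx
      have hπx : π x.1 = 0 := congrArg Subtype.val hx
      have hxK : x.1 ∈ LinearMap.range d₂ := by
        rw [hranged₂, ← hkerπ]
        exact hπx
      obtain ⟨a, ha⟩ := hxK
      exact ⟨a, Subtype.ext ha⟩
  exact ((Submodule.quotEquivOfEq _ _ hkerθ).trans
    (θ.quotKerEquivOfSurjective hθsurj)).symm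

end Helpers

theorem homology_module_of_perfect_complex_iff (R : Type u) [Ring R]
    (M : Type u) [AddCommGroup M] [Module Rᵐᵒᵖ M] :
    ((∃ (P : ChainComplex (ModuleCat.{u} Rᵐᵒᵖ) ℤ) (n : ℤ), IsPerfect R P ∧
        Nonempty (M ≃ₗ[Rᵐᵒᵖ] P.homology n)) ↔
      ∃ F : ModuleCat.{u} Rᵐᵒᵖ, Module.FinitePresentation Rᵐᵒᵖ F ∧
        ∃ i : M →ₗ[Rᵐᵒᵖ] F, Function.Injective i ∧
          ∃ Pr : ModuleCat.{u} Rᵐᵒᵖ, Module.Projective Rᵐᵒᵖ Pr ∧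
            ∃ j : (F ⧸ LinearMap.range i) →ₗ[Rᵐᵒᵖ] Pr, Function.Injective j) ∧
    ((∃ F : ModuleCat.{u} Rᵐᵒᵖ, Module.FinitePresentation Rᵐᵒᵖ F ∧
        ∃ i : M →ₗ[Rᵐᵒᵖ] F, Function.Injective i ∧
          ∃ Pr : ModuleCat.{u} Rᵐᵒᵖ, Module.Projective Rᵐᵒᵖ Pr ∧
            ∃ j : (F ⧸ LinearMap.range i) →ₗ[Rᵐᵒᵖ] Pr, Function.Injective j) →
      ∃ P : ChainComplex (ModuleCat.{u} Rᵐᵒᵖ) ℤ, IsPerfect R P ∧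
        (∀ n : ℤ, n ≠ 0 → n ≠ 1 → n ≠ 2 → IsZero (P.X n)) ∧
        Nonempty (M ≃ₗ[Rᵐᵒᵖ] P.homology 1)) := by
  have hB : (∃ F : ModuleCat.{u} Rᵐᵒᵖ, Module.FinitePresentation Rᵐᵒᵖ F ∧
        ∃ i : M →ₗ[Rᵐᵒᵖ] F, Function.Injective i ∧
          ∃ Pr : ModuleCat.{u} Rᵐᵒᵖ, Module.Projective Rᵐᵒᵖ Pr ∧
            ∃ j : (F ⧸ LinearMap.range i) →ₗ[Rᵐᵒᵖ] Pr, Function.Injective j) →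
      ∃ P : ChainComplex (ModuleCat.{u} Rᵐᵒᵖ) ℤ, IsPerfect R P ∧
        (∀ n : ℤ, n ≠ 0 → n ≠ 1 → n ≠ 2 → IsZero (P.X n)) ∧
        Nonempty (M ≃ₗ[Rᵐᵒᵖ] P.homology 1) := by
    rintro ⟨F, hF, i, hi, Pr, hPr, j, hj⟩
    obtain ⟨S, ⟨hX1f, hX1p⟩, ⟨hX2f, hX2p⟩, ⟨hX3f, hX3p⟩, ⟨e⟩⟩ := partB F hF i hi Pr hPr j hj
    refine ⟨threeComplex S.X₃ S.X₂ S.X₁ S.f S.g S.zero,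
      ⟨⟨0, 2, fun n hn => tX_isZero _ _ _ n (by omega) (by omega) (by omega)⟩, ?_⟩,
      fun n h0 h1 h2 => tX_isZero _ _ _ n h0 h1 h2, ?_⟩
    · intro n
      show Module.Finite Rᵐᵒᵖ (tX S.X₃ S.X₂ S.X₁ n) ∧
        Module.Projective Rᵐᵒᵖ (tX S.X₃ S.X₂ S.X₁ n)
      rcases tX_cases S.X₃ S.X₂ S.X₁ n with h | h | h | h <;> rw [h]
      · exact ⟨hX3f, hX3p⟩
      · exact ⟨hX2f, hX2p⟩
      · exact ⟨hX1f, hX1p⟩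
      · exact ⟨inferInstance, inferInstance⟩
    · exact ⟨e.trans ((SHequiv S).symm.trans
        (homologyEquivSc' (threeComplex S.X₃ S.X₂ S.X₁ S.f S.g S.zero) 1).symm)⟩
  refine ⟨⟨?_, fun hr => ?_⟩, hB⟩
  · rintro ⟨P, n, hP, ⟨e⟩⟩
    exact partA (P.sc' (n+1) n (n-1)) (hP.2 (n+1)).1 (hP.2 n).1 (hP.2 n).2 (hP.2 (n-1)).2
      (e.trans ((homologyEquivSc' P n).trans (SHequiv _)))
  · obtain ⟨P, hP, _, he⟩ := hB hr
    exact ⟨P, 1, hP, he⟩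
end

section
/- Let R be a ring. Every principal right ideal aR of R is flat as a right R-module if and only if for all a, b in R with ab = 0 there exists x in R such that ax = 0 and xb = b. -/
open CategoryTheory CategoryTheory.Limits HomologicalComplex TensorProduct

universe u

/-- The balancing relations inside `M ⊗[ℤ] N` for a right `R`-module `M` and a left
`R`-module `N`. -/
def balanceRel (R : Type u) [Ring R] (M : Type u) [AddCommGroup M] [Module Rᵐᵒᵖ M]
    (N : Type u) [AddCommGroup N] [Module R N] : Submodule ℤ (M ⊗[ℤ] N) :=
  Submodule.span ℤ {z | ∃ (m : M) (r : R) (n : N),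
    z = (MulOpposite.op r • m) ⊗ₜ[ℤ] n - m ⊗ₜ[ℤ] (r • n)}

/-- The tensor product `M ⊗[R] N` of a right `R`-module and a left `R`-module. -/
def RTensor (R : Type u) [Ring R] (M : Type u) [AddCommGroup M] [Module Rᵐᵒᵖ M]
    (N : Type u) [AddCommGroup N] [Module R N] : Type u :=
  (M ⊗[ℤ] N) ⧸ balanceRel R M N

noncomputable instance (R : Type u) [Ring R] (M : Type u) [AddCommGroup M] [Module Rᵐᵒᵖ M]
    (N : Type u) [AddCommGroup N] [Module R N] : AddCommGroup (RTensor R M N) :=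
  inferInstanceAs (AddCommGroup ((M ⊗[ℤ] N) ⧸ balanceRel R M N))

/-- The map `M ⊗[R] N → M ⊗[R] N'` induced by an `R`-linear map `N → N'`. -/
noncomputable def rTensorMap (R : Type u) [Ring R]
    (M : Type u) [AddCommGroup M] [Module Rᵐᵒᵖ M]
    {N N' : Type u} [AddCommGroup N] [Module R N] [AddCommGroup N'] [Module R N']
    (f : N →ₗ[R] N') : RTensor R M N →ₗ[ℤ] RTensor R M N' :=
  Submodule.mapQ (balanceRel R M N) (balanceRel R M N')
    (TensorProduct.map LinearMap.id (f.restrictScalars ℤ)) (by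
      unfold balanceRel
      refine Submodule.span_le.2 ?_
      rintro z ⟨m, r, n, rfl⟩
      rw [SetLike.mem_coe]
      refine Submodule.mem_comap.2 ?_
      refine Submodule.subset_span ⟨m, r, f n, ?_⟩
      exact (by simp [TensorProduct.map_tmul] :
        TensorProduct.map LinearMap.id (f.restrictScalars ℤ)
          ((MulOpposite.op r • m) ⊗ₜ[ℤ] n - m ⊗ₜ[ℤ] (r • n)) =
          (MulOpposite.op r • m) ⊗ₜ[ℤ] f n - m ⊗ₜ[ℤ] (r • f n)))

/-- A right `R`-module `M` is flat if tensoring with `M` over `R` preserves injectivity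
of maps of left `R`-modules. -/
def IsFlatRight (R : Type u) [Ring R] (M : Type u) [AddCommGroup M] [Module Rᵐᵒᵖ M] : Prop :=
  ∀ (N N' : Type u) [AddCommGroup N] [Module R N] [AddCommGroup N'] [Module R N']
    (f : N →ₗ[R] N'), Function.Injective f → Function.Injective (rTensorMap R M f)

namespace PFAux

variable {R : Type u} [Ring R]

lemma mem_spanA {a m : R} :
    m ∈ Submodule.span Rᵐᵒᵖ ({a} : Set R) ↔ ∃ s : R, a * s = m := by
  rw [Submodule.mem_span_singleton]
  constructor
  · rintro ⟨c, rfl⟩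
    exact ⟨c.unop, by simp [MulOpposite.smul_eq_mul_unop]⟩
  · rintro ⟨s, rfl⟩
    exact ⟨MulOpposite.op s, rfl⟩

/-- A choice of `s` with `a * s = m` for `m ∈ aR`. -/
noncomputable def rep (a : R) (m : ↥(Submodule.span Rᵐᵒᵖ ({a} : Set R))) : R :=
  (mem_spanA.mp m.2).choose

lemma rep_spec (a : R) (m : ↥(Submodule.span Rᵐᵒᵖ ({a} : Set R))) :
    a * rep a m = (m : R) :=
  (mem_spanA.mp m.2).choose_spec

/-- The subgroup `ann_r(a)·N` of a left module `N`. -/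
def ann (a : R) (N : Type u) [AddCommGroup N] [Module R N] : Submodule ℤ N :=
  Submodule.span ℤ {z | ∃ (x : R) (n : N), a * x = 0 ∧ z = x • n}

lemma smul_sub_mem {a : R} {N : Type u} [AddCommGroup N] [Module R N]
    {s s' : R} (h : a * s = a * s') (n : N) : s • n - s' • n ∈ ann a N := by
  rw [← sub_smul]
  exact Submodule.subset_span ⟨s - s', n, by rw [mul_sub, h, sub_self], rfl⟩

lemma mkQ_smul_eq {a : R} {N : Type u} [AddCommGroup N] [Module R N]
    {s s' : R} (h : a * s = a * s') (n : N) :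
    (ann a N).mkQ (s • n) = (ann a N).mkQ (s' • n) := by
  rw [Submodule.mkQ_apply, Submodule.mkQ_apply, Submodule.Quotient.eq]
  exact smul_sub_mem h n

/-- The map `aR ⊗[ℤ] N → N ⧸ ann a N`, `(a*s) ⊗ n ↦ [s • n]`. -/
noncomputable def psi (a : R) (N : Type u) [AddCommGroup N] [Module R N] :
    (↥(Submodule.span Rᵐᵒᵖ ({a} : Set R)) ⊗[ℤ] N) →ₗ[ℤ] N ⧸ ann a N :=
  TensorProduct.lift <| AddMonoidHom.toIntLinearMap
    { toFun := fun m => (ann a N).mkQ.comp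
        ((DistribMulAction.toAddMonoidHom N (rep a m)).toIntLinearMap)
      map_zero' := by
        ext n
        have : a * rep a (0 : ↥(Submodule.span Rᵐᵒᵖ ({a} : Set R))) = a * 0 := by
          rw [rep_spec, mul_zero]; rfl
        simpa using mkQ_smul_eq this n
      map_add' := fun m m' => by
        ext n
        have h : a * rep a (m + m') = a * (rep a m + rep a m') := by
          rw [rep_spec, mul_add, rep_spec, rep_spec]; rfl
        simpa [add_smul] using mkQ_smul_eq h n }

lemma psi_tmul (a : R) (N : Type u) [AddCommGroup N] [Module R N]
    (m : ↥(Submodule.span Rᵐᵒᵖ ({a} : Set R))) (n : N) :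
    psi a N (m ⊗ₜ[ℤ] n) = (ann a N).mkQ (rep a m • n) := rfl

lemma balance_le_ker (a : R) (N : Type u) [AddCommGroup N] [Module R N] :
    balanceRel R (↥(Submodule.span Rᵐᵒᵖ ({a} : Set R))) N ≤ LinearMap.ker (psi a N) := by
  refine Submodule.span_le.2 ?_
  rintro z ⟨m, r, n, rfl⟩
  rw [SetLike.mem_coe, LinearMap.mem_ker, map_sub, psi_tmul, psi_tmul]
  have h : a * rep a (MulOpposite.op r • m) = a * (rep a m * r) := by
    rw [rep_spec, ← mul_assoc, rep_spec]
    rfl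
  rw [sub_eq_zero, ← mul_smul]
  exact mkQ_smul_eq h n

lemma mem_ann_of_balance (a : R) (ha : a ∈ Submodule.span Rᵐᵒᵖ ({a} : Set R))
    (N : Type u) [AddCommGroup N] [Module R N] (n : N)
    (h : ((⟨a, ha⟩ : ↥(Submodule.span Rᵐᵒᵖ ({a} : Set R))) ⊗ₜ[ℤ] n)
      ∈ balanceRel R (↥(Submodule.span Rᵐᵒᵖ ({a} : Set R))) N) :
    n ∈ ann a N := by
  have h0 : psi a N ((⟨a, ha⟩ : ↥(Submodule.span Rᵐᵒᵖ ({a} : Set R))) ⊗ₜ[ℤ] n) = 0 :=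
    balance_le_ker a N h
  rw [psi_tmul] at h0
  have h1 : a * rep a (⟨a, ha⟩ : ↥(Submodule.span Rᵐᵒᵖ ({a} : Set R))) = a * 1 := by
    rw [rep_spec, mul_one]
  rw [mkQ_smul_eq h1 n, one_smul, Submodule.mkQ_apply, Submodule.Quotient.mk_eq_zero] at h0
  exact h0

lemma exists_rep (a : R) (ha : a ∈ Submodule.span Rᵐᵒᵖ ({a} : Set R))
    (N : Type u) [AddCommGroup N] [Module R N]
    (t : RTensor R (↥(Submodule.span Rᵐᵒᵖ ({a} : Set R))) N) :
    ∃ n : N, t = Submodule.Quotient.mk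
      ((⟨a, ha⟩ : ↥(Submodule.span Rᵐᵒᵖ ({a} : Set R))) ⊗ₜ[ℤ] n) := by
  obtain ⟨z, rfl⟩ := Submodule.Quotient.mk_surjective
    (balanceRel R (↥(Submodule.span Rᵐᵒᵖ ({a} : Set R))) N) t
  induction z using TensorProduct.induction_on with
  | zero =>
    exact ⟨0, by rw [TensorProduct.tmul_zero]⟩
  | tmul m n =>
    refine ⟨rep a m • n, ?_⟩
    erw [Submodule.Quotient.eq]
    have : MulOpposite.op (rep a m) • (⟨a, ha⟩ : ↥(Submodule.span Rᵐᵒᵖ ({a} : Set R))) = m := by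
      ext
      exact rep_spec a m
    refine Submodule.subset_span ⟨⟨a, ha⟩, rep a m, n, ?_⟩
    rw [this]
  | add z₁ z₂ h₁ h₂ =>
    obtain ⟨n₁, h₁⟩ := h₁
    obtain ⟨n₂, h₂⟩ := h₂
    refine ⟨n₁ + n₂, ?_⟩
    rw [Submodule.Quotient.mk_add, h₁, h₂, ← Submodule.Quotient.mk_add,
      ← TensorProduct.tmul_add]

end PFAux

open PFAux in
theorem principal_right_ideals_flat_iff (R : Type u) [Ring R] :
    (∀ a : R, IsFlatRight R ↥(Submodule.span Rᵐᵒᵖ ({a} : Set R))) ↔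
      ∀ a b : R, a * b = 0 → ∃ x : R, a * x = 0 ∧ x * b = b := by
  constructor
  · -- flatness implies the condition
    intro hflat a b hab
    have ha : a ∈ Submodule.span Rᵐᵒᵖ ({a} : Set R) := Submodule.mem_span_singleton_self a
    set A := Submodule.span Rᵐᵒᵖ ({a} : Set R) with hA
    set Nb := ↥(Submodule.span R ({b} : Set R)) with hNb
    have hb : b ∈ Submodule.span R ({b} : Set R) := Submodule.mem_span_singleton_self b
    have hinj := hflat a Nb R (Submodule.span R ({b} : Set R)).subtype
      (Submodule.injective_subtype _)
    set t : RTensor R (↥A) Nb := Submodule.Quotient.mk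
      ((⟨a, ha⟩ : ↥A) ⊗ₜ[ℤ] (⟨b, hb⟩ : Nb)) with ht
    have hmap : rTensorMap R (↥A) (Submodule.span R ({b} : Set R)).subtype t
        = Submodule.Quotient.mk ((⟨a, ha⟩ : ↥A) ⊗ₜ[ℤ] b) := by
      rw [ht]
      erw [Submodule.mapQ_apply]
      rfl
    have hzero : rTensorMap R (↥A) (Submodule.span R ({b} : Set R)).subtype t = 0 := by
      erw [hmap, Submodule.Quotient.mk_eq_zero]
      have hg : ((MulOpposite.op b • (⟨a, ha⟩ : ↥A)) ⊗ₜ[ℤ] (1 : R)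
          - (⟨a, ha⟩ : ↥A) ⊗ₜ[ℤ] (b • (1 : R))) ∈ balanceRel R (↥A) R :=
        Submodule.subset_span ⟨⟨a, ha⟩, b, 1, rfl⟩
      have h1 : MulOpposite.op b • (⟨a, ha⟩ : ↥A) = 0 := by
        ext; exact hab
      have h2 : b • (1 : R) = b := by rw [smul_eq_mul, mul_one]
      rw [h1, h2, TensorProduct.zero_tmul, zero_sub] at hg
      simpa using (balanceRel R (↥A) R).neg_mem hg
    have ht0 : t = 0 := hinj (by rw [hzero, map_zero])
    erw [ht, Submodule.Quotient.mk_eq_zero] at ht0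
    have hmem : (⟨b, hb⟩ : Nb) ∈ ann a Nb := mem_ann_of_balance a ha Nb _ ht0
    -- extract the witness by span induction
    have key : ∀ (p : Nb), p ∈ ann a Nb → ∃ y : R, a * y = 0 ∧ y * b = (p : R) := by
      intro p hp
      induction hp using Submodule.span_induction with
      | mem z hz =>
        obtain ⟨x, n, hx, rfl⟩ := hz
        obtain ⟨s, hs⟩ := Submodule.mem_span_singleton.mp n.2
        refine ⟨x * s, by rw [← mul_assoc, hx, zero_mul], ?_⟩
        have : ((x • n : Nb) : R) = x • (n : R) := rfl
        rw [this, ← hs]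
        simp [mul_assoc, smul_eq_mul]
      | zero => exact ⟨0, by simp⟩
      | add p q hp hq ihp ihq =>
        obtain ⟨y₁, hy₁, hb₁⟩ := ihp
        obtain ⟨y₂, hy₂, hb₂⟩ := ihq
        exact ⟨y₁ + y₂, by rw [mul_add, hy₁, hy₂, add_zero],
          by rw [add_mul, hb₁, hb₂]; rfl⟩
      | smul k p hp ihp =>
        obtain ⟨y, hy, hby⟩ := ihp
        refine ⟨k • y, ?_, ?_⟩
        · rw [mul_smul_comm, hy, smul_zero]
        · have h5 := map_intCast_smul ((Submodule.span R ({b} : Set R)).subtype.toAddMonoidHom)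
            ℤ ℤ k p
          simp only [Int.cast_id] at h5
          rw [smul_mul_assoc, hby]
          exact h5.symm
    obtain ⟨y, hy, hyb⟩ := key _ hmem
    exact ⟨y, hy, hyb⟩
  · -- the condition implies flatness
    intro hcond a
    intro N N' _ _ _ _ f hf
    have ha : a ∈ Submodule.span Rᵐᵒᵖ ({a} : Set R) := Submodule.mem_span_singleton_self a
    set A := Submodule.span Rᵐᵒᵖ ({a} : Set R) with hA
    rw [injective_iff_map_eq_zero]
    intro t ht
    obtain ⟨n, rfl⟩ := exists_rep a ha N t
    have hmap : rTensorMap R (↥A) f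
        (Submodule.Quotient.mk ((⟨a, ha⟩ : ↥A) ⊗ₜ[ℤ] n))
        = Submodule.Quotient.mk ((⟨a, ha⟩ : ↥A) ⊗ₜ[ℤ] f n) := by
      erw [Submodule.mapQ_apply]
      rfl
    erw [hmap, Submodule.Quotient.mk_eq_zero] at ht
    have hmem : f n ∈ ann a N' := mem_ann_of_balance a ha N' _ ht
    -- find a single x with a*x = 0 and x • (f n) = f n
    have key : ∀ (p : N'), p ∈ ann a N' → ∃ x : R, a * x = 0 ∧ x • p = p := by
      intro p hp
      induction hp using Submodule.span_induction with
      | mem z hz =>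
        obtain ⟨x, n', hx, rfl⟩ := hz
        obtain ⟨x', hx', hxx⟩ := hcond a x hx
        exact ⟨x', hx', by rw [← mul_smul, hxx]⟩
      | zero => exact ⟨0, by simp⟩
      | add p q hp hq ihp ihq =>
        obtain ⟨x₁, hx₁, hp₁⟩ := ihp
        obtain ⟨x₂, hx₂, hq₂⟩ := ihq
        have hb' : a * (x₂ - x₁ * x₂) = 0 := by
          rw [mul_sub, ← mul_assoc, hx₁, zero_mul, hx₂, sub_zero]
        obtain ⟨x₃, hx₃, hx₃b⟩ := hcond a _ hb'
        refine ⟨x₁ + x₃ - x₃ * x₁, ?_, ?_⟩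
        · rw [mul_sub, mul_add, hx₁, hx₃, ← mul_assoc, hx₃, zero_mul]
          simp
        · have e1 : (x₁ + x₃ - x₃ * x₁) • p = p := by
            rw [sub_smul, add_smul, mul_smul, hp₁]
            abel
          have e2 : (x₁ + x₃ - x₃ * x₁) • q = q := by
            have hs : x₃ • (q - x₁ • q) = q - x₁ • q := by
              have h3 : (x₃ * (x₂ - x₁ * x₂)) • q = (x₂ - x₁ * x₂) • q := by
                rw [hx₃b]
              calc x₃ • (q - x₁ • q) = x₃ • ((x₂ - x₁ * x₂) • q) := by
                    rw [sub_smul, mul_smul, hq₂]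
                _ = (x₃ * (x₂ - x₁ * x₂)) • q := (mul_smul _ _ _).symm
                _ = (x₂ - x₁ * x₂) • q := h3
                _ = q - x₁ • q := by rw [sub_smul, mul_smul, hq₂]
            rw [smul_sub] at hs
            rw [sub_smul, add_smul, mul_smul x₃ x₁ q]
            calc x₁ • q + x₃ • q - x₃ • (x₁ • q)
                = x₁ • q + (x₃ • q - x₃ • (x₁ • q)) := by abel
              _ = x₁ • q + (q - x₁ • q) := by rw [hs]
              _ = q := by abel
          rw [smul_add, e1, e2]
      | smul k p hp ihp =>
        obtain ⟨x, hx, hxp⟩ := ihp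
        refine ⟨x, hx, ?_⟩
        have := map_intCast_smul (DistribMulAction.toAddMonoidHom N' x) ℤ ℤ k p
        simp only [Int.cast_id] at this
        rw [DistribMulAction.toAddMonoidHom_apply, DistribMulAction.toAddMonoidHom_apply] at this
        rw [this, hxp]
    obtain ⟨x, hx, hxfn⟩ := key _ hmem
    have hxn : x • n = n := hf (by rw [map_smul, hxfn])
    erw [Submodule.Quotient.mk_eq_zero]
    have hg : ((MulOpposite.op x • (⟨a, ha⟩ : ↥A)) ⊗ₜ[ℤ] n
        - (⟨a, ha⟩ : ↥A) ⊗ₜ[ℤ] (x • n)) ∈ balanceRel R (↥A) N :=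
      Submodule.subset_span ⟨⟨a, ha⟩, x, n, rfl⟩
    have h1 : MulOpposite.op x • (⟨a, ha⟩ : ↥A) = 0 := by ext; exact hx
    rw [h1, hxn, TensorProduct.zero_tmul, zero_sub] at hg
    simpa using (balanceRel R (↥A) N).neg_mem hg
end
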